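/- Consider the multi-step value iteration: given Qⁱ : Z × U → ℝ with greedy policy μⁱ(z) = argmin_v Qⁱ(z,v), and horizon Hᵢ ≥ 1, define Qⁱ⁺¹(z,a) = L(z,a) + Σ_{l=1}^{Hᵢ−1} γˡ L(z_l, μⁱ(z_l)) + γ^{Hᵢ} Qⁱ(z_{Hᵢ}, μⁱ(z_{Hᵢ})), where z₁ = F(z,a) and z_l = F(z_{l−1}, μⁱ(z_{l−1})) for l > 1. If Q⁰ satisfies Q⁰(z,a) ≥ L(z,a) + γ min_v Q⁰(F(z,a), v) for all (z,a), then for every i and all (z,a): Qⁱ⁺¹(z,a) ≤ L(z,a) + γ min_v Qⁱ(F(z,a), v) ≤ Qⁱ(z,a). In particular, the sequence (Qⁱ) is pointwise nonincreasing. -/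

import Mathlib

/-- multi-step value iteration with horizons `H i ≥ 1`.
If `Q⁰(z,a) ≥ L(z,a) + γ min_v Q⁰(F(z,a),v)` then for every `i`,
`Qⁱ⁺¹ ≤ L + γ min_v Qⁱ(F(z,a),·) ≤ Qⁱ`; in particular `(Qⁱ)` is
pointwise nonincreasing. The minimum of `Qⁱ(z,·)` is attained by the
greedy policy `μ i`. -/
theorem stmt1 {Z U : Type*} (F : Z → U → Z) (L : Z → U → ℝ) (γ : ℝ)
    (hγ : 0 < γ) (hγ1 : γ ≤ 1) (hL : ∀ z a, 0 ≤ L z a)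
    (H : ℕ → ℕ) (hH : ∀ i, 1 ≤ H i)
    (Q : ℕ → Z → U → ℝ) (μ : ℕ → Z → U)
    (hgreedy : ∀ i z v, Q i z (μ i z) ≤ Q i z v)
    -- trajectory generated from (z,a) at iteration i: z₁ = F(z,a),
    -- z_{l+1} = F(z_l, μⁱ(z_l)) for l ≥ 1
    (zseq : ℕ → Z → U → ℕ → Z)
    (hz1 : ∀ i z a, zseq i z a 1 = F z a)
    (hzl : ∀ i z a l, 1 ≤ l →
      zseq i z a (l + 1) = F (zseq i z a l) (μ i (zseq i z a l)))
    -- multi-step policy evaluation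
    (hupd : ∀ i z a, Q (i + 1) z a =
      L z a + (∑ l ∈ Finset.Ico 1 (H i),
        γ ^ l * L (zseq i z a l) (μ i (zseq i z a l)))
      + γ ^ (H i) * Q i (zseq i z a (H i)) (μ i (zseq i z a (H i))))
    -- initialization condition (12)
    (hinit : ∀ z a, L z a + γ * Q 0 (F z a) (μ 0 (F z a)) ≤ Q 0 z a) :
    (∀ i z a, Q (i + 1) z a ≤ L z a + γ * Q i (F z a) (μ i (F z a)) ∧
      L z a + γ * Q i (F z a) (μ i (F z a)) ≤ Q i z a) ∧
    (∀ i z a, Q (i + 1) z a ≤ Q i z a) := by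
  -- trajectory shift lemma
  have hzshift : ∀ i z a l, 1 ≤ l →
      zseq i (F z a) (μ i (F z a)) l = zseq i z a (l + 1) := by
    intro i z a l hl
    induction l, hl using Nat.le_induction with
    | base => rw [hz1, ← hz1 i z a, hzl i z a 1 le_rfl]
    | succ l hl ih =>
      rw [hzl i (F z a) (μ i (F z a)) l hl, ih, ← hzl i z a (l+1) (by omega)]
  set T : ℕ → Z → U → ℕ → ℝ := fun i z a k =>
    (∑ l ∈ Finset.Ico 1 k, γ ^ (l-1) * L (zseq i z a l) (μ i (zseq i z a l)))
      + γ ^ (k-1) * Q i (zseq i z a k) (μ i (zseq i z a k)) with hTdef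
  have hT1 : ∀ i z a, T i z a 1 = Q i (F z a) (μ i (F z a)) := by
    intro i z a
    simp [hTdef, hz1]
  have hQT : ∀ i z a, Q (i+1) z a = L z a + γ * T i z a (H i) := by
    intro i z a
    rw [hupd, hTdef]
    have h1 : γ * ((∑ l ∈ Finset.Ico 1 (H i),
        γ ^ (l-1) * L (zseq i z a l) (μ i (zseq i z a l)))
        + γ ^ (H i - 1) * Q i (zseq i z a (H i)) (μ i (zseq i z a (H i))))
      = (∑ l ∈ Finset.Ico 1 (H i),
        γ ^ l * L (zseq i z a l) (μ i (zseq i z a l)))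
        + γ ^ (H i) * Q i (zseq i z a (H i)) (μ i (zseq i z a (H i))) := by
      rw [mul_add, Finset.mul_sum]
      congr 1
      · apply Finset.sum_congr rfl
        intro l hl
        have hl1 : 1 ≤ l := (Finset.mem_Ico.mp hl).1
        rw [← mul_assoc, ← pow_succ', Nat.sub_add_cancel hl1]
      · rw [← mul_assoc, ← pow_succ', Nat.sub_add_cancel (hH i)]
    rw [add_assoc, ← h1]
  have hstep : ∀ i, (∀ z a, L z a + γ * Q i (F z a) (μ i (F z a)) ≤ Q i z a) →
      ∀ z a k, 1 ≤ k → T i z a (k+1) ≤ T i z a k := by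
    intro i hB z a k hk
    rw [hTdef]
    simp only
    rw [Finset.sum_Ico_succ_top hk, Nat.add_sub_cancel]
    have hz : zseq i z a (k+1) = F (zseq i z a k) (μ i (zseq i z a k)) :=
      hzl i z a k hk
    have hb := hB (zseq i z a k) (μ i (zseq i z a k))
    rw [← hz] at hb
    calc (∑ l ∈ Finset.Ico 1 k, γ ^ (l-1) * L (zseq i z a l) (μ i (zseq i z a l)))
          + γ ^ (k-1) * L (zseq i z a k) (μ i (zseq i z a k))
          + γ ^ k * Q i (zseq i z a (k+1)) (μ i (zseq i z a (k+1)))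
        = (∑ l ∈ Finset.Ico 1 k, γ ^ (l-1) * L (zseq i z a l) (μ i (zseq i z a l)))
          + γ ^ (k-1) * (L (zseq i z a k) (μ i (zseq i z a k))
            + γ * Q i (zseq i z a (k+1)) (μ i (zseq i z a (k+1)))) := by
          have : γ ^ k = γ ^ (k-1) * γ := by
            rw [← pow_succ, Nat.sub_add_cancel hk]
          rw [this]; ring
      _ ≤ (∑ l ∈ Finset.Ico 1 k, γ ^ (l-1) * L (zseq i z a l) (μ i (zseq i z a l)))
          + γ ^ (k-1) * Q i (zseq i z a k) (μ i (zseq i z a k)) := by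
          exact add_le_add le_rfl
            (mul_le_mul_of_nonneg_left hb (pow_nonneg hγ.le _))
  have hmono : ∀ i, (∀ z a, L z a + γ * Q i (F z a) (μ i (F z a)) ≤ Q i z a) →
      ∀ z a k, 1 ≤ k → T i z a k ≤ T i z a 1 := by
    intro i hB z a k hk
    induction k, hk using Nat.le_induction with
    | base => exact le_rfl
    | succ k hk ih => exact le_trans (hstep i hB z a k hk) ih
  have hshiftQ : ∀ i z a, Q (i+1) (F z a) (μ i (F z a)) = T i z a (H i + 1) := by
    intro i z a
    rw [hupd, hTdef]
    simp only [Nat.add_sub_cancel]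
    rw [hzshift i z a (H i) (hH i)]
    have hsum2 : ∑ l ∈ Finset.Ico 1 (H i), γ ^ l
          * L (zseq i (F z a) (μ i (F z a)) l) (μ i (zseq i (F z a) (μ i (F z a)) l))
        = ∑ l ∈ Finset.Ico 1 (H i), γ ^ l
          * L (zseq i z a (l+1)) (μ i (zseq i z a (l+1))) :=
      Finset.sum_congr rfl (fun l hl => by
        rw [hzshift i z a l (Finset.mem_Ico.mp hl).1])
    rw [hsum2]
    have hsum3 : ∑ l ∈ Finset.Ico 1 (H i + 1),
          γ ^ (l-1) * L (zseq i z a l) (μ i (zseq i z a l))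
        = L (F z a) (μ i (F z a)) + ∑ l ∈ Finset.Ico 1 (H i), γ ^ l
          * L (zseq i z a (l+1)) (μ i (zseq i z a (l+1))) := by
      rw [Finset.sum_Ico_eq_sum_range, Finset.sum_Ico_eq_sum_range]
      simp only [Nat.add_sub_cancel, Nat.add_sub_cancel_left]
      obtain ⟨m, hm⟩ : ∃ m, H i = m + 1 :=
        ⟨H i - 1, by have := hH i; omega⟩
      rw [hm]
      rw [Finset.sum_range_succ']
      simp only [Nat.add_sub_cancel, pow_zero, one_mul, Nat.add_zero, hz1]
      rw [add_comm]
      simp [Nat.add_comm, Nat.add_assoc, Nat.add_left_comm]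
    rw [hsum3]
  have hB : ∀ i z a, L z a + γ * Q i (F z a) (μ i (F z a)) ≤ Q i z a := by
    intro i
    induction i with
    | zero => exact hinit
    | succ i ih =>
      intro z a
      rw [hQT i z a]
      have h1 : Q (i+1) (F z a) (μ (i+1) (F z a)) ≤ T i z a (H i) := by
        calc Q (i+1) (F z a) (μ (i+1) (F z a))
            ≤ Q (i+1) (F z a) (μ i (F z a)) := hgreedy (i+1) _ _
          _ = T i z a (H i + 1) := hshiftQ i z a
          _ ≤ T i z a (H i) := hstep i ih z a (H i) (hH i)
      have h2 := mul_le_mul_of_nonneg_left h1 hγ.le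
      linarith
  have hkey : ∀ i z a, Q (i+1) z a ≤ L z a + γ * Q i (F z a) (μ i (F z a)) := by
    intro i z a
    rw [hQT i z a, ← hT1 i z a]
    have h1 := hmono i (fun z a => hB i z a) z a (H i) (hH i)
    have h2 := mul_le_mul_of_nonneg_left h1 hγ.le
    linarith
  exact ⟨fun i z a => ⟨hkey i z a, hB i z a⟩,
    fun i z a => le_trans (hkey i z a) (hB i z a)⟩
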